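/- Let α be a probabilistic metric on X with respect to the Łukasiewicz t-norm *_Ł. Define β(x,y,0) = 0 and β(x,y,t) = e^{α(x,y,t)−1} for t > 0. Then β is a probabilistic metric on X with respect to the product t-norm *_P, and δ_α = δ_β. -/

import Mathlib

open scoped ENNReal

/-- A distance distribution: a map `[0,∞] → [0,1]` with value `0` at `0`, `1` at `∞`,
monotone and left-continuous on `(0,∞)`. -/
structure IsDistanceDistribution (φ : ℝ≥0∞ → ℝ) : Prop where
  mem : ∀ t, φ t ∈ Set.Icc (0:ℝ) 1
  zero : φ 0 = 0
  top : φ ⊤ = 1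
  mono : Monotone φ
  leftCont : ∀ t : ℝ≥0∞, 0 < t → t ≠ ⊤ → φ t = ⨆ s : {s : ℝ≥0∞ // s < t}, φ s.1

/-- A continuous t-norm on the interval `[a,b] ⊆ ℝ`. -/
structure IsContinuousTNorm (a b : ℝ) (m : ℝ → ℝ → ℝ) : Prop where
  mem : ∀ ⦃p q : ℝ⦄, p ∈ Set.Icc a b → q ∈ Set.Icc a b → m p q ∈ Set.Icc a b
  comm : ∀ ⦃p q : ℝ⦄, p ∈ Set.Icc a b → q ∈ Set.Icc a b → m p q = m q p
  assoc : ∀ ⦃p q r : ℝ⦄, p ∈ Set.Icc a b → q ∈ Set.Icc a b → r ∈ Set.Icc a b →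
    m (m p q) r = m p (m q r)
  unit : ∀ ⦃p : ℝ⦄, p ∈ Set.Icc a b → m p b = p
  mono : ∀ ⦃p p' q q' : ℝ⦄, p ∈ Set.Icc a b → p' ∈ Set.Icc a b → q ∈ Set.Icc a b →
    q' ∈ Set.Icc a b → p ≤ p' → q ≤ q' → m p q ≤ m p' q'
  continuous : ContinuousOn (fun x : ℝ × ℝ => m x.1 x.2) (Set.Icc a b ×ˢ Set.Icc a b)

/-- `α` is a probabilistic metric on `X` with respect to the t-norm `m` on `[0,1]`. -/
structure IsProbMetric {X : Type*} (m : ℝ → ℝ → ℝ) (α : X → X → ℝ≥0∞ → ℝ) : Prop where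
  dd : ∀ x y, IsDistanceDistribution (α x y)
  refl : ∀ x (t : ℝ≥0∞), 0 < t → α x x t = 1
  symm : ∀ x y t, α x y t = α y x t
  sep : ∀ x y, (∀ t : ℝ≥0∞, 0 < t → α x y t = 1) → x = y
  triangle : ∀ x y z (r s : ℝ≥0∞), m (α y z r) (α x y s) ≤ α x z (r + s)

/-- The approach distance induced by a probabilistic metric:
`δ_α(x,A) = inf { r | sup_{a ∈ A} α(x,a,r) = 1 }`. -/
noncomputable def probDist {X : Type*} (α : X → X → ℝ≥0∞ → ℝ) (x : X) (A : Set X) : ℝ≥0∞ :=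
  sInf {r : ℝ≥0∞ | sSup ((fun a => α x a r) '' A) = 1}

/-- `δ` is an approach structure on `X`. -/
structure IsApproach {X : Type*} (δ : X → Set X → ℝ≥0∞) : Prop where
  point : ∀ x, δ x {x} = 0
  empty : ∀ x, δ x (∅ : Set X) = ⊤
  union : ∀ x A B, δ x (A ∪ B) = min (δ x A) (δ x B)
  triangle : ∀ x (A B : Set X), δ x A ≤ (⨆ b : B, δ b.1 A) + δ x B

/-- An approach structure is probabilistic metrizable w.r.t. the t-norm `m`. -/
def ProbMetrizable {X : Type*} (m : ℝ → ℝ → ℝ) (δ : X → Set X → ℝ≥0∞) : Prop :=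
  ∃ α : X → X → ℝ≥0∞ → ℝ, IsProbMetric m α ∧ ∀ x A, δ x A = probDist α x A

/-- The minimum t-norm. -/
def minT : ℝ → ℝ → ℝ := fun p q => min p q
/-- The product t-norm. -/
def prodT : ℝ → ℝ → ℝ := fun p q => p * q
/-- The Łukasiewicz t-norm. -/
def lukT : ℝ → ℝ → ℝ := fun p q => max 0 (p + q - 1)

/-- `q⁻`: the largest idempotent element of `m` in `[a, q]`. -/
noncomputable def idemBelow (a : ℝ) (m : ℝ → ℝ → ℝ) (q : ℝ) : ℝ :=
  sSup {p : ℝ | p ∈ Set.Icc a q ∧ m p p = p}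
theorem stmt11 {X : Type*} (α β : X → X → ℝ≥0∞ → ℝ) (hα : IsProbMetric lukT α)
    (hβ0 : ∀ x y, β x y 0 = 0)
    (hβ : ∀ x y (t : ℝ≥0∞), t ≠ 0 → β x y t = Real.exp (α x y t - 1)) :
    IsProbMetric prodT β ∧ ∀ x A, probDist α x A = probDist β x A := by
  have hαmem : ∀ x y t, α x y t ∈ Set.Icc (0:ℝ) 1 := fun x y t => (hα.dd x y).mem t
  have hβnn : ∀ x y t, 0 ≤ β x y t := by
    intro x y t
    rcases eq_or_ne t 0 with h | h
    · rw [h, hβ0]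
    · rw [hβ x y t h]; exact (Real.exp_pos _).le
  have hβle1 : ∀ x y t, β x y t ≤ 1 := by
    intro x y t
    rcases eq_or_ne t 0 with h | h
    · rw [h, hβ0]; norm_num
    · rw [hβ x y t h]
      calc Real.exp (α x y t - 1) ≤ Real.exp 0 :=
            Real.exp_le_exp.2 (by linarith [(hαmem x y t).2])
        _ = 1 := Real.exp_zero
  have hβmono : ∀ x y, Monotone (β x y) := by
    intro x y s t hst
    rcases eq_or_ne s 0 with h | h
    · rw [h, hβ0]; exact hβnn x y t
    · have ht : t ≠ 0 := fun h' => h (le_antisymm (h' ▸ hst) zero_le)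
      rw [hβ x y s h, hβ x y t ht]
      exact Real.exp_le_exp.2 (by linarith [(hα.dd x y).mono hst])
  constructor
  · constructor
    · -- dd
      intro x y
      refine ⟨fun t => ⟨hβnn x y t, hβle1 x y t⟩, hβ0 x y, ?_, hβmono x y, ?_⟩
      · rw [hβ x y ⊤ (by simp), (hα.dd x y).top]; simp
      · intro t ht htop
        have hne : Nonempty {s : ℝ≥0∞ // s < t} := ⟨⟨0, ht⟩⟩
        have hbdd : BddAbove (Set.range fun s : {s : ℝ≥0∞ // s < t} => β x y s.1) :=
          ⟨1, by rintro _ ⟨s, rfl⟩; exact hβle1 x y s.1⟩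
        refine le_antisymm ?_ (ciSup_le fun s => hβmono x y s.2.le)
        -- β x y t ≤ ⨆
        rw [hβ x y t (ne_of_gt ht), (hα.dd x y).leftCont t ht htop]
        have hbddα : BddAbove (Set.range fun s : {s : ℝ≥0∞ // s < t} => α x y s.1) :=
          ⟨1, by rintro _ ⟨s, rfl⟩; exact (hαmem x y s.1).2⟩
        have hmap : Real.exp ((⨆ s : {s : ℝ≥0∞ // s < t}, α x y s.1) - 1)
            = ⨆ s : {s : ℝ≥0∞ // s < t}, Real.exp (α x y s.1 - 1) := by
          have hm : Monotone (fun v : ℝ => Real.exp (v - 1)) :=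
            fun a b hab => Real.exp_le_exp.2 (by linarith)
          exact hm.map_ciSup_of_continuousAt
            ((Real.continuous_exp.comp (continuous_id.sub continuous_const)).continuousAt)
            hbddα
        rw [hmap]
        refine ciSup_le fun s => ?_
        rcases eq_or_ne s.1 0 with h0 | h0
        · obtain ⟨u, hu0, hut⟩ := exists_between ht
          refine le_trans ?_ (le_ciSup hbdd ⟨u, hut⟩)
          rw [hβ x y u (ne_of_gt hu0), h0, (hα.dd x y).zero]
          exact Real.exp_le_exp.2 (by linarith [(hαmem x y u).1])
        · rw [← hβ x y s.1 h0]
          exact le_ciSup hbdd s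
    · -- refl
      intro x t ht
      rw [hβ x x t (ne_of_gt ht), hα.refl x t ht]
      simp
    · -- symm
      intro x y t
      rcases eq_or_ne t 0 with h | h
      · rw [h, hβ0, hβ0]
      · rw [hβ x y t h, hβ y x t h, hα.symm]
    · -- sep
      intro x y h
      refine hα.sep x y fun t ht => ?_
      have := h t ht
      rw [hβ x y t (ne_of_gt ht)] at this
      have h2 : α x y t - 1 = 0 := Real.exp_injective (by rw [this, Real.exp_zero])
      linarith
    · -- triangle
      intro x y z r s
      unfold prodT
      rcases eq_or_ne r 0 with hr | hr
      · rw [hr, hβ0]; rw [zero_mul]; exact hβnn x z _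
      rcases eq_or_ne s 0 with hs | hs
      · rw [hs, hβ0]; rw [mul_zero]; exact hβnn x z _
      have hrs : r + s ≠ 0 := by simp [hr, hs]
      rw [hβ y z r hr, hβ x y s hs, hβ x z _ hrs, ← Real.exp_add]
      refine Real.exp_le_exp.2 ?_
      have htri := hα.triangle x y z r s
      unfold lukT at htri
      have : α y z r + α x y s - 1 ≤ max 0 (α y z r + α x y s - 1) := le_max_right _ _
      linarith
  · -- probDist equality
    intro x A
    unfold probDist
    congr 1
    ext r
    simp only [Set.mem_setOf_eq]
    rcases A.eq_empty_or_nonempty with rfl | hA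
    · simp [Real.sSup_empty]
    rcases eq_or_ne r 0 with rfl | hr
    · constructor <;> intro h <;> exfalso
      · have : sSup ((fun a => α x a 0) '' A) ≤ 0 := by
          refine Real.sSup_le ?_ le_rfl
          rintro _ ⟨a, _, rfl⟩
          exact le_of_eq ((hα.dd x a).zero)
        linarith [h ▸ this]
      · have : sSup ((fun a => β x a 0) '' A) ≤ 0 := by
          refine Real.sSup_le ?_ le_rfl
          rintro _ ⟨a, _, rfl⟩
          exact le_of_eq (hβ0 x a)
        linarith [h ▸ this]
    · have himg : (fun a => β x a r) '' A
          = (fun v : ℝ => Real.exp (v - 1)) '' ((fun a => α x a r) '' A) := by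
        rw [Set.image_image]
        exact Set.image_congr fun a _ => hβ x a r hr
      have hm : Monotone (fun v : ℝ => Real.exp (v - 1)) :=
        fun a b hab => Real.exp_le_exp.2 (by linarith)
      have hbdd : BddAbove ((fun a => α x a r) '' A) :=
        ⟨1, by rintro _ ⟨a, _, rfl⟩; exact (hαmem x a r).2⟩
      have hne : ((fun a => α x a r) '' A).Nonempty := hA.image _
      have hmap : sSup ((fun a => β x a r) '' A)
          = Real.exp (sSup ((fun a => α x a r) '' A) - 1) := by
        rw [himg]
        exact (hm.map_csSup_of_continuousAt
          ((Real.continuous_exp.comp (continuous_id.sub continuous_const)).continuousAt)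
          hne hbdd).symm
      rw [hmap]
      constructor
      · intro h; rw [h]; simp
      · intro h
        have : sSup ((fun a => α x a r) '' A) - 1 = 0 :=
          Real.exp_injective (by rw [h, Real.exp_zero])
        linarith
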